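/- arXiv:1902.01128 — 2 statements merged into one kernel-verified Lean document; each statement's English description precedes it below -/
import Mathlib

section
/- Define q(λ) = W(exp(a + b/λ − 1)) / (W(exp(a + b/λ − 1)) + 1) for λ > 0, with a ∈ ℝ, b > 0, and W the principal Lambert W function. Then q is strictly decreasing on (0, ∞), with derivative dq/dλ = −b·q(λ)·(1−q(λ))²/λ². -/
theorem q_lambda_strictly_decreasing (a b : ℝ) (hb : 0 < b)
    (W : ℝ → ℝ) (hW : ∀ y > 0, W y * Real.exp (W y) = y ∧ 0 < W y)
    (q : ℝ → ℝ)
    (hq : ∀ lam > 0, q lam = W (Real.exp (a + b / lam - 1)) /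
      (W (Real.exp (a + b / lam - 1)) + 1)) :
    StrictAntiOn q (Set.Ioi 0) ∧
    ∀ lam > 0, HasDerivAt q (-(b * q lam * (1 - q lam) ^ 2) / lam ^ 2) lam := by
  -- g u = W (exp u)
  set g : ℝ → ℝ := fun u => W (Real.exp u) with hg_def
  -- f w = w + log w
  set f : ℝ → ℝ := fun w => w + Real.log w with hf_def
  have hgpos : ∀ u, 0 < g u := fun u => (hW _ (Real.exp_pos u)).2
  have hfg : ∀ u, f (g u) = u := by
    intro u
    have h1 := (hW _ (Real.exp_pos u)).1
    have h2 := hgpos u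
    have := congrArg Real.log h1
    rw [Real.log_mul h2.ne' (Real.exp_ne_zero _), Real.log_exp, Real.log_exp] at this
    simp only [hf_def]
    linarith
  -- f is strictly monotone on positives
  have hfmono : ∀ w₁ w₂ : ℝ, 0 < w₁ → 0 < w₂ → w₁ < w₂ → f w₁ < f w₂ := by
    intro w₁ w₂ h1 h2 h
    have := Real.log_lt_log h1 h
    simp only [hf_def]
    linarith
  have hgmono : StrictMono g := by
    intro u v huv
    by_contra hle
    push_neg at hle
    rcases eq_or_lt_of_le hle with heq | hlt
    · have h : f (g v) = f (g u) := by rw [heq]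
      rw [hfg, hfg] at h; linarith
    · have h := hfmono _ _ (hgpos v) (hgpos u) hlt
      rw [hfg, hfg] at h; linarith
  -- range of g is Ioi 0
  have hrange : Set.range g = Set.Ioi 0 := by
    apply Set.eq_of_subset_of_subset
    · rintro x ⟨u, rfl⟩; exact hgpos u
    · rintro w hw
      refine ⟨f w, ?_⟩
      have h1 : f (g (f w)) = f w := hfg (f w)
      rcases lt_trichotomy (g (f w)) w with h | h | h
      · exact absurd h1 (ne_of_lt (hfmono _ _ (hgpos _) hw h))
      · exact h
      · exact absurd h1 (ne_of_gt (hfmono _ _ hw (hgpos _) h))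
  -- continuity of g
  have hgcont : ∀ u, ContinuousAt g u := by
    intro u
    apply continuousAt_of_monotoneOn_of_image_mem_nhds
      (fun x _ y _ hxy => (hgmono.monotone hxy)) Filter.univ_mem
    rw [Set.image_univ, hrange]
    exact Ioi_mem_nhds (hgpos u)
  -- derivative of g
  have hgderiv : ∀ u, HasDerivAt g (g u / (g u + 1)) u := by
    intro u
    have hw := hgpos u
    have hf' : HasDerivAt f (1 + (g u)⁻¹) (g u) :=
      (hasDerivAt_id _).add (Real.hasDerivAt_log hw.ne')
    have hne : (1 : ℝ) + (g u)⁻¹ ≠ 0 := by positivity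
    have := HasDerivAt.of_local_left_inverse (hgcont u) hf' hne
      (Filter.Eventually.of_forall hfg)
    convert this using 1
    case e'_4 => rfl
    field_simp
  -- derivative of q at each lam > 0
  have key : ∀ lam > 0, HasDerivAt q (-(b * q lam * (1 - q lam) ^ 2) / lam ^ 2) lam := by
    intro lam hlam
    have hlam' : lam ≠ 0 := hlam.ne'
    set u : ℝ := a + b / lam - 1 with hu_def
    set w : ℝ := g u with hw_def
    have hw : 0 < w := hgpos u
    have hw1 : w + 1 ≠ 0 := by positivity
    -- inner function lam ↦ a + b/lam - 1
    have hinner : HasDerivAt (fun x : ℝ => a + b / x - 1) (-b / lam ^ 2) lam := by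
      have h1 : HasDerivAt (fun x : ℝ => b / x) (b * (-(lam ^ 2)⁻¹)) lam := by
        simpa [div_eq_mul_inv] using (hasDerivAt_inv hlam').const_mul b
      have := (h1.const_add a).sub_const 1
      convert this using 1
      case e'_4 => rfl
      case e'_5 => rfl
      field_simp
    have hcomp : HasDerivAt (fun x : ℝ => g (a + b / x - 1))
        (w / (w + 1) * (-b / lam ^ 2)) lam := (hgderiv u).comp (h := fun x : ℝ => a + b / x - 1) lam hinner
    have hQ : HasDerivAt (fun x : ℝ => g (a + b / x - 1) / (g (a + b / x - 1) + 1))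
        ((w / (w + 1) * (-b / lam ^ 2) * (w + 1) - w * (w / (w + 1) * (-b / lam ^ 2)))
          / (w + 1) ^ 2) lam := hcomp.div (hcomp.add_const 1) hw1
    have heq : q =ᶠ[nhds lam] fun x : ℝ => g (a + b / x - 1) / (g (a + b / x - 1) + 1) := by
      filter_upwards [Ioi_mem_nhds hlam] with x hx
      exact hq x hx
    have hqlam : q lam = w / (w + 1) := hq lam hlam
    have := hQ.congr_of_eventuallyEq heq
    convert this using 1
    case e'_4 => rfl
    case e'_5 => rfl
    rw [hqlam]
    field_simp
    ring
  refine ⟨?_, key⟩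
  -- strict antitonicity
  have hconv : Convex ℝ (Set.Ioi (0 : ℝ)) := convex_Ioi 0
  apply strictAntiOn_of_deriv_neg hconv
  · intro x hx
    exact ((key x hx).continuousAt).continuousWithinAt
  · intro x hx
    rw [interior_Ioi] at hx
    rw [(key x hx).deriv]
    have hx' : (0:ℝ) < x := hx
    have hqx : q x = g (a + b / x - 1) / (g (a + b / x - 1) + 1) := hq x hx
    set w : ℝ := g (a + b / x - 1) with hw_def
    have hw : 0 < w := hgpos _
    have h1 : 0 < q x := by rw [hqx]; positivity
    have h2 : q x < 1 := by
      rw [hqx]; rw [div_lt_one (by positivity)]; linarith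
    have : 0 < b * q x * (1 - q x) ^ 2 := by
      apply mul_pos (mul_pos hb h1)
      have : (0:ℝ) < 1 - q x := by linarith
      positivity
    apply div_neg_of_neg_of_pos (by linarith) (by positivity)
end

section
/- In the KKT analysis, the equivalence holds: for λ ≥ 0, the condition d/dq [λ D q c(q) − D q] = 0 at q ∈ (0,1) (with D > 0, b > 0, c(q) = -a/b − (1/b)(ln(1−q) − ln q)) holds if and only if λ > 0 and q = W(exp(a + b/λ − 1)) / (W(exp(a + b/λ − 1)) + 1). -/
theorem kkt_stationarity_iff_lambertW (a b D lam : ℝ) (hb : 0 < b) (hD : 0 < D)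
    (hlam : 0 ≤ lam)
    (W : ℝ → ℝ) (hW : ∀ y > 0, W y * Real.exp (W y) = y ∧ 0 < W y)
    (c : ℝ → ℝ)
    (hc : ∀ p ∈ Set.Ioo (0 : ℝ) 1,
      c p = -a / b - (1 / b) * (Real.log (1 - p) - Real.log p)) :
    ∀ q ∈ Set.Ioo (0 : ℝ) 1,
      deriv (fun t => lam * (D * t * c t) - D * t) q = 0 ↔
      (0 < lam ∧
        q = W (Real.exp (a + b / lam - 1)) / (W (Real.exp (a + b / lam - 1)) + 1)) := by
  rintro q ⟨hq0, hq1⟩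
  have h1q : 0 < 1 - q := by linarith
  -- Derivative computation
  have hmem : Set.Ioo (0:ℝ) 1 ∈ nhds q := isOpen_Ioo.mem_nhds ⟨hq0, hq1⟩
  have hev : (fun t => lam * (D * t * c t) - D * t) =ᶠ[nhds q]
      (fun t => lam * (D * t * (-a / b - (1 / b) * (Real.log (1 - t) - Real.log t))) - D * t) := by
    filter_upwards [hmem] with p hp
    rw [hc p hp]
  have h1 : HasDerivAt (fun t : ℝ => 1 - t) (-1) q := by
    simpa using (hasDerivAt_id q).const_sub 1
  have hlog1 : HasDerivAt (fun t => Real.log (1 - t)) ((1 - q)⁻¹ * (-1)) q :=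
    (Real.hasDerivAt_log h1q.ne').comp q h1
  have hlog2 : HasDerivAt Real.log q⁻¹ q := Real.hasDerivAt_log hq0.ne'
  have hsub : HasDerivAt (fun t => Real.log (1 - t) - Real.log t)
      ((1 - q)⁻¹ * (-1) - q⁻¹) q := hlog1.sub hlog2
  have hcf : HasDerivAt (fun t => -a / b - (1 / b) * (Real.log (1 - t) - Real.log t))
      (-(1 / b * ((1 - q)⁻¹ * (-1) - q⁻¹))) q := (hsub.const_mul (1 / b)).const_sub (-a / b)
  have hDt : HasDerivAt (fun t : ℝ => D * t) D q := by
    simpa using (hasDerivAt_id q).const_mul D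
  have hmul : HasDerivAt
      (fun t => D * t * (-a / b - (1 / b) * (Real.log (1 - t) - Real.log t)))
      (D * (-a / b - (1 / b) * (Real.log (1 - q) - Real.log q)) +
        (D * q) * (-(1 / b * ((1 - q)⁻¹ * (-1) - q⁻¹)))) q := hDt.mul hcf
  have hfull : HasDerivAt
      (fun t => lam * (D * t * (-a / b - (1 / b) * (Real.log (1 - t) - Real.log t))) - D * t)
      (lam * (D * (-a / b - (1 / b) * (Real.log (1 - q) - Real.log q)) +
        (D * q) * (-(1 / b * ((1 - q)⁻¹ * (-1) - q⁻¹)))) - D) q := (hmul.const_mul lam).sub hDt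
  have hderiv : deriv (fun t => lam * (D * t * c t) - D * t) q =
      lam * (D * (-a / b - (1 / b) * (Real.log (1 - q) - Real.log q)) +
        (D * q) * (-(1 / b * ((1 - q)⁻¹ * (-1) - q⁻¹)))) - D := by
    rw [hev.deriv_eq]
    exact hfull.deriv
  -- Reduce to the algebraic equation
  have hEform : lam * (D * (-a / b - (1 / b) * (Real.log (1 - q) - Real.log q)) +
        (D * q) * (-(1 / b * ((1 - q)⁻¹ * (-1) - q⁻¹)))) - D =
      (D / b) * (lam * (1 - a + (Real.log q - Real.log (1 - q)) + q / (1 - q)) - b) := by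
    field_simp
    ring
  have hkey : deriv (fun t => lam * (D * t * c t) - D * t) q = 0 ↔
      lam * (1 - a + (Real.log q - Real.log (1 - q)) + q / (1 - q)) = b := by
    rw [hderiv, hEform]
    constructor
    · intro h
      rcases mul_eq_zero.1 h with h' | h'
      · exact absurd h' (div_ne_zero hD.ne' hb.ne')
      · linarith
    · intro h
      rw [h]
      ring
  rw [hkey]
  have hlogx : Real.log q - Real.log (1 - q) = Real.log (q / (1 - q)) :=
    (Real.log_div hq0.ne' h1q.ne').symm
  have hx : 0 < q / (1 - q) := div_pos hq0 h1q
  constructor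
  · intro h
    have hlam0 : 0 < lam := by
      rcases hlam.lt_or_eq with h' | h'
      · exact h'
      · exfalso; rw [← h'] at h; simp at h; linarith
    set y := Real.exp (a + b / lam - 1) with hy_def
    have hy : 0 < y := Real.exp_pos _
    obtain ⟨hWeq, hWpos⟩ := hW y hy
    set x := q / (1 - q) with hx_def
    have hsum : Real.log x + x = a + b / lam - 1 := by
      rw [hlogx] at h
      have : 1 - a + Real.log x + x = b / lam := by
        field_simp at h ⊢
        linarith
      linarith
    have hxe : x * Real.exp x = y := by
      calc x * Real.exp x = Real.exp (Real.log x) * Real.exp x := by rw [Real.exp_log hx]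
        _ = Real.exp (Real.log x + x) := (Real.exp_add _ _).symm
        _ = y := by rw [hsum]
    have mono : ∀ s t : ℝ, 0 < s → s < t → s * Real.exp s < t * Real.exp t := by
      intro s t hs hst
      exact mul_lt_mul'' hst (Real.exp_lt_exp.2 hst) hs.le (Real.exp_pos s).le
    have hxW : x = W y := by
      rcases lt_trichotomy x (W y) with h' | h' | h'
      · have := mono x (W y) hx h'
        rw [hxe, hWeq] at this
        linarith
      · exact h'
      · have := mono (W y) x hWpos h'
        rw [hxe, hWeq] at this
        linarith
    refine ⟨hlam0, ?_⟩
    rw [← hxW]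
    have hxne : x + 1 ≠ 0 := by positivity
    rw [eq_div_iff hxne, hx_def]
    field_simp
    ring
  · rintro ⟨hlam0, hqeq⟩
    set y := Real.exp (a + b / lam - 1) with hy_def
    have hy : 0 < y := Real.exp_pos _
    obtain ⟨hWeq, hWpos⟩ := hW y hy
    have hWne : W y + 1 ≠ 0 := by positivity
    have hx' : q / (1 - q) = W y := by
      have h2 : (1 : ℝ) - W y / (W y + 1) = 1 / (W y + 1) := by field_simp; ring
      rw [hqeq, h2]
      field_simp
    have hlogW : Real.log (W y) + W y = a + b / lam - 1 := by
      have h2 : Real.log (W y * Real.exp (W y)) = Real.log y := by rw [hWeq]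
      rw [Real.log_mul hWpos.ne' (Real.exp_pos _).ne', Real.log_exp] at h2
      rw [h2, hy_def, Real.log_exp]
    rw [hlogx, hx']
    have h3 : lam * (1 - a + Real.log (W y) + W y) = lam * (1 - a + (a + b / lam - 1)) := by
      rw [← hlogW]; ring
    rw [h3]
    field_simp
    ring
end
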